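/- Let k be a commutative ring and A a k-algebra such that the sandwich map A ⊗_k A^op → End_k(A) is an isomorphism and A is finitely generated projective and faithful as a k-module. Then A is separable over k, i.e., A is projective as an A^e-module. -/

import Mathlib

open TensorProduct MulOpposite

/-- The sandwich map `A ⊗[k] Aᵐᵒᵖ →ₗ[k] End_k(A)`, sending `a ⊗ b` to `x ↦ a * x * b`. -/
noncomputable def sandwich (k A : Type*) [CommRing k] [Ring A] [Algebra k A] :
    (A ⊗[k] Aᵐᵒᵖ) →ₗ[k] Module.End k A :=
  TensorProduct.lift <|
    LinearMap.mk₂ k (fun a b => (LinearMap.mulLeft k a) ∘ₗ (LinearMap.mulRight k b.unop))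
      (fun a a' b => by ext x; simp [add_mul])
      (fun c a b => by ext x; simp [smul_mul_assoc])
      (fun a b b' => by ext x; simp [mul_add])
      (fun c a b => by ext x; simp [mul_smul_comm])

/-- `A` as a module over its enveloping algebra `A ⊗[k] Aᵐᵒᵖ`, via `(a ⊗ b) • x = a * x * b`. -/
noncomputable instance envModule (k A : Type*) [CommRing k] [Ring A] [Algebra k A] :
    Module (A ⊗[k] Aᵐᵒᵖ) A :=
  TensorProduct.Algebra.module

theorem env_smul_eq_sandwich (k A : Type*) [CommRing k] [Ring A] [Algebra k A]
    (e : A ⊗[k] Aᵐᵒᵖ) (x : A) : e • x = sandwich k A e x := by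
  induction e using TensorProduct.induction_on with
  | zero => rw [map_zero, LinearMap.zero_apply]; exact zero_smul (A ⊗[k] Aᵐᵒᵖ) x
  | tmul a b => rfl
  | add u v hu hv => rw [add_smul, hu, hv, map_add]; rfl


set_option maxHeartbeats 1000000 in
set_option synthInstance.maxHeartbeats 400000 in
/-- If the sandwich map is an isomorphism and `A` is finitely generated
projective and faithful as a `k`-module, then `A` is separable over `k`, i.e. projective
as a module over `A^e = A ⊗[k] Aᵐᵒᵖ`. -/
theorem azumaya_implies_separable (k A : Type*) [CommRing k] [Ring A] [Algebra k A]
    (hsand : Function.Bijective (sandwich k A))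
    (hfin : Module.Finite k A) (hproj : Module.Projective k A)
    (hfaith : FaithfulSMul k A) :
    Module.Projective (A ⊗[k] Aᵐᵒᵖ) A := by
  classical
  -- Step 1: dual basis
  obtain ⟨n, π, hπ⟩ := Module.Finite.exists_fin' k A
  obtain ⟨σ, hσ⟩ := Module.projective_lifting_property π (LinearMap.id) hπ
  set f : Fin n → (A →ₗ[k] k) := fun i => (LinearMap.proj i).comp σ with hf
  set x : Fin n → A := fun i => π (Pi.single i 1) with hx
  have hsingle : ∀ (i : Fin n) (cc : k), π (Pi.single i cc) = cc • x i := by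
    intro i cc
    rw [hx, ← map_smul]
    congr 1
    ext j
    by_cases h : j = i <;> simp [Pi.single_apply, h]
  have hdual : ∀ a : A, ∑ i, f i a • x i = a := by
    intro a
    have h1 : π (σ a) = a := by simpa using LinearMap.congr_fun hσ a
    calc ∑ i, f i a • x i = ∑ i, π (Pi.single i (σ a i)) := by
          refine Finset.sum_congr rfl fun i _ => ?_
          rw [hsingle]
          rfl
      _ = π (∑ i, Pi.single i (σ a i)) := (map_sum π _ _).symm
      _ = π (σ a) := by rw [Finset.univ_sum_single]
      _ = a := h1
  -- Step 2: trace ideal is everything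
  set T : Ideal k := Ideal.span (Set.range fun p : Fin n × Fin n => f p.1 (x p.2)) with hT
  have hgen : ∀ p : Fin n × Fin n, f p.1 (x p.2) ∈ T := fun p =>
    Ideal.subset_span ⟨p, rfl⟩
  have hmemT : ∀ (g : A →ₗ[k] k) (a : A), g a ∈ T := by
    have aux : ∀ (i : Fin n) (a : A), f i a ∈ T := by
      intro i a
      have : f i a = ∑ j, f j a * f i (x j) := by
        conv_lhs => rw [← hdual a]
        simp [mul_comm]
      rw [this]
      exact Ideal.sum_mem _ fun j _ => Ideal.mul_mem_left _ _ (hgen (i, j))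
    intro g a
    have : g a = ∑ i, f i a * g (x i) := by
      conv_lhs => rw [← hdual a]
      simp
    rw [this]
    exact Ideal.sum_mem _ fun i _ => Ideal.mul_mem_right _ _ (aux i a)
  have hTfg : T.FG := Submodule.fg_span (Set.finite_range _)
  have hTle : T ≤ T • T := by
    rw [hT, Ideal.span_le]
    rintro _ ⟨p, rfl⟩
    dsimp only
    rw [Ideal.smul_eq_mul]
    have : f p.1 (x p.2) = ∑ j, f j (x p.2) * f p.1 (x j) := by
      conv_lhs => rw [← hdual (x p.2)]
      simp [mul_comm]
    rw [this]
    exact Ideal.sum_mem _ fun j _ => Ideal.mul_mem_mul (hgen (j, p.2)) (hgen (p.1, j))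
  obtain ⟨r, hr1, hr0⟩ :=
    Submodule.exists_sub_one_mem_and_smul_eq_zero_of_fg_of_le_smul T T hTfg hTle
  have hrzero : r = 0 := by
    refine eq_of_smul_eq_smul (α := A) (fun a => ?_)
    have : r • a = ∑ i, (r * f i a) • x i := by
      conv_lhs => rw [← hdual a]
      rw [Finset.smul_sum]
      simp [smul_smul]
    rw [this]
    have : ∀ i, r * f i a = 0 := fun i => by
      have := hr0 _ (hmemT (f i) a); rwa [smul_eq_mul] at this
    simp [this]
  have hone : (1 : k) ∈ T := by
    have : r - 1 ∈ T := hr1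
    rw [hrzero, zero_sub] at this
    simpa using T.neg_mem this
  rw [hT, Ideal.span, Submodule.mem_span_range_iff_exists_fun] at hone
  obtain ⟨c, hc⟩ := hone
  -- combined dual family summing to 1
  set g : Fin n × Fin n → (A →ₗ[k] k) := fun p => c p • f p.1 with hg
  set q : Fin n × Fin n → A := fun p => x p.2 with hq
  have hgq : ∑ p, g p (q p) = 1 := by
    simpa [g, q, smul_eq_mul] using hc
  -- Step 3: split A off a free module over E = A ⊗ Aᵐᵒᵖ
  set S := sandwich k A with hS
  set Seq : (A ⊗[k] Aᵐᵒᵖ) ≃ₗ[k] Module.End k A := LinearEquiv.ofBijective S hsand with hSeq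
  have key : ∀ (e : A ⊗[k] Aᵐᵒᵖ) (y : A), e • y = S e y := env_smul_eq_sandwich k A
  have keymul : ∀ (e e' : A ⊗[k] Aᵐᵒᵖ) (y : A), S (e * e') y = S e (S e' y) := by
    intro e e' y
    rw [← key, ← key, ← key, mul_smul]
  set Pi : (Fin n × Fin n → A ⊗[k] Aᵐᵒᵖ) →ₗ[A ⊗[k] Aᵐᵒᵖ] A :=
    { toFun := fun v => ∑ p, v p • q p
      map_add' := fun v w => by simp [add_smul, Finset.sum_add_distrib]
      map_smul' := fun e v => by
        simp only [Pi.smul_apply, smul_eq_mul, RingHom.id_apply, mul_smul, ← Finset.smul_sum] }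
    with hPi
  have hSe : ∀ z : A ⊗[k] Aᵐᵒᵖ, (Seq z : Module.End k A) = S z := fun z => rfl
  have hSsymm : ∀ w : Module.End k A, S (Seq.symm w) = w := fun w => by
    rw [← hSe, Seq.apply_symm_apply]
  set Sig : A →ₗ[A ⊗[k] Aᵐᵒᵖ] (Fin n × Fin n → A ⊗[k] Aᵐᵒᵖ) :=
    { toFun := fun a p => Seq.symm (LinearMap.smulRight (g p) a)
      map_add' := fun a b => by
        funext p
        show Seq.symm (LinearMap.smulRight (g p) (a + b))
            = Seq.symm (LinearMap.smulRight (g p) a) + Seq.symm (LinearMap.smulRight (g p) b)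
        rw [← map_add]
        congr 1
        ext y
        simp
      map_smul' := fun e a => by
        funext p
        show Seq.symm (LinearMap.smulRight (g p) (e • a))
            = (e • fun p' => Seq.symm (LinearMap.smulRight (g p') a)) p
        have hmul : Seq (e * Seq.symm (LinearMap.smulRight (g p) a))
            = LinearMap.smulRight (g p) (e • a) := by
          ext y
          rw [hSe, keymul, hSsymm]
          simp only [LinearMap.smulRight_apply]
          rw [map_smul, ← key]
        calc Seq.symm (LinearMap.smulRight (g p) (e • a))
            = Seq.symm (Seq (e * Seq.symm (LinearMap.smulRight (g p) a))) := by rw [hmul]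
          _ = e * Seq.symm (LinearMap.smulRight (g p) a) := Seq.symm_apply_apply _
          _ = _ := rfl }
    with hSig
  have hcomp : Pi.comp Sig = LinearMap.id := by
    ext a
    simp only [LinearMap.comp_apply, LinearMap.coe_mk, AddHom.coe_mk, LinearMap.id_apply, hPi, hSig]
    have : ∀ p : Fin n × Fin n,
        (Seq.symm (LinearMap.smulRight (g p) a)) • q p = g p (q p) • a := by
      intro p
      rw [key]
      rw [hSsymm]
      simp
    calc ∑ p, (Seq.symm (LinearMap.smulRight (g p) a)) • q p
        = ∑ p, g p (q p) • a := by simp only [this]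
      _ = (∑ p, g p (q p)) • a := by rw [Finset.sum_smul]
      _ = a := by rw [hgq, one_smul]
  exact Module.Projective.of_split Sig Pi hcomp
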